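/- Under the drift condition (Pg)(x) ≤ g(x) − r(x) + b·1_C(x) with r ≥ 1, the Markov chain started from any x satisfies E_x[T(C)] ≤ g(x) + b, and in particular T(C) < ∞ almost surely, so the chain hits C in finite time. -/

import Mathlib

open MeasureTheory ProbabilityTheory
open scoped ENNReal Classical

/-- **Statement 1.** If the Markov chain with kernel `P` (with path laws `μ x`) satisfies the
drift condition `(Pg)(x) ≤ g(x) − r(x) + b·1_C(x)` (stated additively to avoid truncated
subtraction), then for every `x`,
`E_x[T(C)] ≤ g(x) + b` (where `T(C)`, the first hitting time of `C`, is expressed as the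
number of times `j` with `X_i ∉ C` for all `i ≤ j`), and `T(C) < ∞` a.s. -/
theorem stmt2 {S : Type*} [MeasurableSpace S]
    (P : Kernel S S) [IsMarkovKernel P]
    (μ : S → Measure (ℕ → S))
    (hprob : ∀ x, IsProbabilityMeasure (μ x))
    (hinit : ∀ x, μ x {ω | ω 0 = x} = 1)
    -- Markov property: for any functional of the path up to time `k` and any test
    -- function of the state at time `k+1`, one may integrate out the last step via `P`.
    (hMarkov : ∀ x (k : ℕ) (F : (ℕ → S) → ℝ≥0∞), Measurable F →
      (∀ ω ω' : ℕ → S, (∀ i ≤ k, ω i = ω' i) → F ω = F ω') →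
      ∀ f : S → ℝ≥0∞, Measurable f →
        ∫⁻ ω, F ω * f (ω (k + 1)) ∂(μ x) =
        ∫⁻ ω, F ω * ∫⁻ y, f y ∂(P (ω k)) ∂(μ x))
    (g r : S → NNReal) (hg : Measurable g) (hr : Measurable r)
    (hr1 : ∀ x, 1 ≤ r x) (b : NNReal)
    (C : Set S) (hCmeas : MeasurableSet C)
    (hdrift : ∀ x, (∫⁻ y, (g y : ℝ≥0∞) ∂(P x)) + (r x : ℝ≥0∞) ≤
      (g x : ℝ≥0∞) + C.indicator (fun _ => (b : ℝ≥0∞)) x) :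
    ∀ x : S,
      (∫⁻ ω, (∑' j : ℕ, if ∀ i ≤ j, ω i ∉ C then (1 : ℝ≥0∞) else 0) ∂(μ x) ≤
        (g x : ℝ≥0∞) + (b : ℝ≥0∞)) ∧
      μ x {ω | ∀ k : ℕ, ω k ∉ C} = 0 := by
  intro x
  haveI := hprob x
  set F : ℕ → (ℕ → S) → ℝ≥0∞ :=
    fun n ω => if ∀ i ≤ n, ω i ∉ C then (1 : ℝ≥0∞) else 0 with hFdef
  have hgE : Measurable fun y => (g y : ℝ≥0∞) := hg.coe_nnreal_ennreal
  have hPg : Measurable fun y => ∫⁻ z, (g z : ℝ≥0∞) ∂(P y) := hgE.lintegral_kernel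
  have hFset : ∀ n, MeasurableSet {ω : ℕ → S | ∀ i ≤ n, ω i ∉ C} := by
    intro n
    have : {ω : ℕ → S | ∀ i ≤ n, ω i ∉ C} =
        ⋂ i ∈ Finset.Iic n, (fun ω : ℕ → S => ω i) ⁻¹' Cᶜ := by
      ext ω; simp [Set.mem_iInter]
    rw [this]
    exact MeasurableSet.biInter (Set.to_countable _)
      fun i _ => (measurable_pi_apply i) hCmeas.compl
  have hFmeas : ∀ n, Measurable (F n) := fun n =>
    Measurable.ite (hFset n) measurable_const measurable_const
  have hFdep : ∀ n (ω ω' : ℕ → S), (∀ i ≤ n, ω i = ω' i) → F n ω = F n ω' := by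
    intro n ω ω' h
    simp only [hFdef]
    exact if_congr ⟨fun H i hi => h i hi ▸ H i hi, fun H i hi => (h i hi).symm ▸ H i hi⟩ rfl rfl
  -- generic: a measurable functional of the initial coordinate integrates to its value at x
  have hL : ∀ (H : S → ℝ≥0∞), Measurable H → ∫⁻ ω, H (ω 0) ∂(μ x) = H x := by
    intro H hH
    have hAm : MeasurableSet {ω : ℕ → S | H (ω 0) = H x} :=
      (hH.comp (measurable_pi_apply 0)) (measurableSet_singleton (H x))
    have hA1 : μ x {ω : ℕ → S | H (ω 0) = H x} = 1 := by
      refine le_antisymm prob_le_one ?_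
      rw [← hinit x]
      exact measure_mono fun ω hω => by simp [Set.mem_setOf_eq] at hω ⊢; rw [hω]
    have hae : ∀ᵐ ω ∂(μ x), H (ω 0) = H x := by
      rw [ae_iff]
      have heq : {ω : ℕ → S | ¬ H (ω 0) = H x} = {ω : ℕ → S | H (ω 0) = H x}ᶜ := rfl
      rw [heq, measure_compl hAm (measure_ne_top _ _), hA1, measure_univ]
      simp
    rw [lintegral_congr_ae hae, lintegral_const, measure_univ, mul_one]
  -- the quantities
  set a : ℕ → ℝ≥0∞ := fun n => ∫⁻ ω, F n ω * (g (ω (n + 1)) : ℝ≥0∞) ∂(μ x) with hadef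
  -- main estimate by induction
  have key : ∀ n : ℕ,
      a n + ∑ j ∈ Finset.range (n + 1), ∫⁻ ω, F j ω ∂(μ x) ≤ (g x : ℝ≥0∞) + b := by
    intro n
    induction n with
    | zero =>
      have hM := hMarkov x 0 (F 0) (hFmeas 0) (hFdep 0) _ hgE
      have hcomb : a 0 + ∫⁻ ω, F 0 ω ∂(μ x) =
          ∫⁻ ω, F 0 ω * ((∫⁻ z, (g z : ℝ≥0∞) ∂(P (ω 0))) + 1) ∂(μ x) := by
        rw [hadef]
        simp only
        rw [hM, ← lintegral_add_right _ (hFmeas 0)]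
        congr 1; ext ω; ring
      have hH : (fun ω : ℕ → S => F 0 ω * ((∫⁻ z, (g z : ℝ≥0∞) ∂(P (ω 0))) + 1)) =
          fun ω => (fun y => (if y ∉ C then (1:ℝ≥0∞) else 0) *
            ((∫⁻ z, (g z : ℝ≥0∞) ∂(P y)) + 1)) (ω 0) := by
        funext ω
        simp only [hFdef]
        congr 1
        simp [Nat.le_zero]
      rw [Finset.sum_range_one, hcomb, hH,
        hL (fun y => (if y ∉ C then (1:ℝ≥0∞) else 0) *
            ((∫⁻ z, (g z : ℝ≥0∞) ∂(P y)) + 1)) ((Measurable.ite hCmeas.compl measurable_const measurable_const).mul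
          (hPg.add measurable_const))]
      by_cases hxC : x ∈ C
      · simp [hxC]
      · simp only [hxC, not_false_iff, if_true, one_mul]
        have h1 := hdrift x
        rw [Set.indicator_of_notMem hxC, add_zero] at h1
        calc (∫⁻ z, (g z : ℝ≥0∞) ∂(P x)) + 1
            ≤ (∫⁻ z, (g z : ℝ≥0∞) ∂(P x)) + (r x : ℝ≥0∞) := by
              gcongr; exact_mod_cast hr1 x
          _ ≤ (g x : ℝ≥0∞) := h1
          _ ≤ (g x : ℝ≥0∞) + b := le_self_add
    | succ n ih =>
      have hM := hMarkov x (n + 1) (F (n + 1)) (hFmeas (n + 1)) (hFdep (n + 1)) _ hgE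
      have hstep : a (n + 1) + ∫⁻ ω, F (n + 1) ω ∂(μ x) ≤ a n := by
        have hcomb : a (n + 1) + ∫⁻ ω, F (n + 1) ω ∂(μ x) =
            ∫⁻ ω, F (n + 1) ω * ((∫⁻ z, (g z : ℝ≥0∞) ∂(P (ω (n + 1)))) + 1) ∂(μ x) := by
          rw [hadef]
          simp only
          rw [hM, ← lintegral_add_right _ (hFmeas (n + 1))]
          congr 1; ext ω; ring
        rw [hcomb, hadef]
        refine lintegral_mono fun ω => ?_
        by_cases h : ∀ i ≤ n + 1, ω i ∉ C
        · have hFn1 : F (n + 1) ω = 1 := if_pos h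
          have hFn : F n ω = 1 := if_pos fun i hi => h i (hi.trans (Nat.le_succ n))
          have hnC : ω (n + 1) ∉ C := h (n + 1) le_rfl
          rw [hFn1, hFn, one_mul, one_mul]
          have h1 := hdrift (ω (n + 1))
          rw [Set.indicator_of_notMem hnC, add_zero] at h1
          calc (∫⁻ z, (g z : ℝ≥0∞) ∂(P (ω (n + 1)))) + 1
              ≤ (∫⁻ z, (g z : ℝ≥0∞) ∂(P (ω (n + 1)))) + (r (ω (n + 1)) : ℝ≥0∞) := by
                gcongr; exact_mod_cast hr1 _
            _ ≤ (g (ω (n + 1)) : ℝ≥0∞) := h1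
        · have : F (n + 1) ω = 0 := if_neg h
          simp [this]
      calc a (n + 1) + ∑ j ∈ Finset.range (n + 2), ∫⁻ ω, F j ω ∂(μ x)
          = (a (n + 1) + ∫⁻ ω, F (n + 1) ω ∂(μ x)) +
              ∑ j ∈ Finset.range (n + 1), ∫⁻ ω, F j ω ∂(μ x) := by
            rw [Finset.sum_range_succ]; ring
        _ ≤ a n + ∑ j ∈ Finset.range (n + 1), ∫⁻ ω, F j ω ∂(μ x) := by gcongr
        _ ≤ (g x : ℝ≥0∞) + b := ih
  have hsum : ∀ n : ℕ, ∑ j ∈ Finset.range (n + 1), ∫⁻ ω, F j ω ∂(μ x) ≤ (g x : ℝ≥0∞) + b :=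
    fun n => le_trans le_add_self (key n)
  have hmain : ∫⁻ ω, (∑' j : ℕ, F j ω) ∂(μ x) ≤ (g x : ℝ≥0∞) + b := by
    rw [lintegral_tsum fun j => (hFmeas j).aemeasurable]
    refine Summable.tsum_le_of_sum_le ENNReal.summable fun s => ?_
    by_cases hs : s.Nonempty
    · obtain ⟨m, hm⟩ := s.exists_max_image id hs
      calc ∑ j ∈ s, ∫⁻ ω, F j ω ∂(μ x)
          ≤ ∑ j ∈ Finset.range (m + 1), ∫⁻ ω, F j ω ∂(μ x) := by
            refine Finset.sum_le_sum_of_subset fun j hj => ?_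
            exact Finset.mem_range.mpr (Nat.lt_succ_of_le (hm.2 j hj))
        _ ≤ (g x : ℝ≥0∞) + b := hsum m
    · simp [Finset.not_nonempty_iff_eq_empty.mp hs]
  refine ⟨hmain, ?_⟩
  have hne : ∫⁻ ω, (∑' j : ℕ, F j ω) ∂(μ x) ≠ ⊤ :=
    (lt_of_le_of_lt hmain (by exact_mod_cast ENNReal.coe_lt_top (r := g x + b))).ne
  have hmeas : Measurable fun ω => ∑' j : ℕ, F j ω := Measurable.ennreal_tsum hFmeas
  have hae := ae_lt_top hmeas hne
  rw [ae_iff] at hae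
  refine measure_mono_null (fun ω hω => ?_) hae
  simp only [Set.mem_setOf_eq, not_lt, top_le_iff]
  have : ∀ j, F j ω = 1 := fun j => if_pos fun i _ => hω i
  rw [tsum_congr fun j => this j]
  exact ENNReal.tsum_const_eq_top_of_ne_zero one_ne_zero
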